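/- Let α, β > 0, p₁, p₂ ∈ (0,1], x > 0, and let f, g be positive integrable functions on [0,x] bounded as 0 < v₁ ≤ f ≤ v₂ and 0 < w₁ ≤ g ≤ w₂ by positive integrable functions. Then I^{α,p₁}[1](x)·I^{β,p₂}[fg](x) + I^{β,p₂}[1](x)·I^{α,p₁}[fg](x) - I^{α,p₁}[f](x)·I^{β,p₂}[g](x) - I^{β,p₂}[f](x)·I^{α,p₁}[g](x) ≤ |A₁(f,v₁,v₂)(x) + A₂(f,v₁,v₂)(x)|^{1/2} · |A₁(g,w₁,w₂)(x) + A₂(g,w₁,w₂)(x)|^{1/2}, where A₁(u,v,w)(x) = I^{β,p₂}[1](x) · (I^{α,p₁}[(v+w)u](x))² / (4 I^{α,p₁}[vw](x)) - I^{α,p₁}[u](x)·I^{β,p₂}[u](x) and A₂(u,v,w)(x) = I^{α,p₁}[1](x) · (I^{β,p₂}[(v+w)u](x))² / (4 I^{β,p₂}[vw](x)) - I^{α,p₁}[u](x)·I^{β,p₂}[u](x). -/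

import Mathlib

open MeasureTheory

/-- Kernel of the generalized proportional fractional (GPF) integral. -/
noncomputable def gpfKernel (α p x τ : ℝ) : ℝ :=
  Real.exp (((p - 1) / p) * (x - τ)) * (x - τ) ^ (α - 1)

/-- Generalized proportional fractional integral
`I^{α,p}[h](x) = (1/(p^α Γ(α))) ∫₀ˣ e^{((p-1)/p)(x-τ)} (x-τ)^{α-1} h(τ) dτ`. -/
noncomputable def gpf (α p x : ℝ) (h : ℝ → ℝ) : ℝ :=
  (1 / (p ^ α * Real.Gamma α)) * ∫ τ in (0:ℝ)..x, gpfKernel α p x τ * h τ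

/-- Integrability of the GPF integrand. -/
def GpfIntegrable (α p x : ℝ) (h : ℝ → ℝ) : Prop :=
  IntervalIntegrable (fun τ => gpfKernel α p x τ * h τ) volume 0 x

lemma gpf_const_pos {α p : ℝ} (hα : 0 < α) (hp : 0 < p) :
    0 < 1 / (p ^ α * Real.Gamma α) := by
  have := Real.Gamma_pos_of_pos hα
  have := Real.rpow_pos_of_pos hp α
  positivity

lemma gpfKernel_nonneg {α p x : ℝ} (τ : ℝ) (h : τ ≤ x) : 0 ≤ gpfKernel α p x τ := by
  unfold gpfKernel
  exact mul_nonneg (Real.exp_pos _).le (Real.rpow_nonneg (by linarith) _)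

lemma gpfKernel_pos {α p x : ℝ} (τ : ℝ) (h : τ < x) : 0 < gpfKernel α p x τ := by
  unfold gpfKernel
  exact mul_pos (Real.exp_pos _) (Real.rpow_pos_of_pos (by linarith) _)

lemma gpf_nonneg {α p x : ℝ} (hα : 0 < α) (hp : 0 < p) (hx : 0 ≤ x) {h : ℝ → ℝ}
    (hh : ∀ τ ∈ Set.Icc (0:ℝ) x, 0 ≤ h τ) : 0 ≤ gpf α p x h := by
  refine mul_nonneg (gpf_const_pos hα hp).le ?_
  exact intervalIntegral.integral_nonneg hx fun u hu =>
    mul_nonneg (gpfKernel_nonneg u hu.2) (hh u hu)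

lemma gpf_mono {α p x : ℝ} (hα : 0 < α) (hp : 0 < p) (hx : 0 ≤ x) {h₁ h₂ : ℝ → ℝ}
    (i1 : GpfIntegrable α p x h₁) (i2 : GpfIntegrable α p x h₂)
    (hh : ∀ τ ∈ Set.Icc (0:ℝ) x, h₁ τ ≤ h₂ τ) : gpf α p x h₁ ≤ gpf α p x h₂ := by
  refine mul_le_mul_of_nonneg_left ?_ (gpf_const_pos hα hp).le
  exact intervalIntegral.integral_mono_on hx i1 i2 fun u hu =>
    mul_le_mul_of_nonneg_left (hh u hu) (gpfKernel_nonneg u hu.2)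

lemma gpf_pos {α p x : ℝ} (hα : 0 < α) (hp : 0 < p) (hx : 0 < x) {h : ℝ → ℝ}
    (ih : GpfIntegrable α p x h)
    (hh : ∀ τ ∈ Set.Icc (0:ℝ) x, 0 < h τ) : 0 < gpf α p x h := by
  refine mul_pos (gpf_const_pos hα hp) ?_
  exact intervalIntegral.intervalIntegral_pos_of_pos_on ih
    (fun u hu => mul_pos (gpfKernel_pos u hu.2) (hh u ⟨hu.1.le, hu.2.le⟩)) hx

lemma gpf_smul (α p x c : ℝ) (h : ℝ → ℝ) :
    gpf α p x (fun τ => c * h τ) = c * gpf α p x h := by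
  unfold gpf
  rw [show (fun τ => gpfKernel α p x τ * (c * h τ))
      = fun τ => c * (gpfKernel α p x τ * h τ) by funext τ; ring,
    intervalIntegral.integral_const_mul]
  ring

lemma gpf_add {α p x : ℝ} {h₁ h₂ : ℝ → ℝ} (i1 : GpfIntegrable α p x h₁)
    (i2 : GpfIntegrable α p x h₂) :
    gpf α p x (fun τ => h₁ τ + h₂ τ) = gpf α p x h₁ + gpf α p x h₂ := by
  unfold gpf
  rw [show (fun τ => gpfKernel α p x τ * (h₁ τ + h₂ τ))
      = fun τ => gpfKernel α p x τ * h₁ τ + gpfKernel α p x τ * h₂ τ by funext τ; ring,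
    intervalIntegral.integral_add i1 i2]
  ring

lemma GpfIntegrable.smul {α p x : ℝ} {h : ℝ → ℝ} (i : GpfIntegrable α p x h) (c : ℝ) :
    GpfIntegrable α p x (fun τ => c * h τ) := by
  have := i.const_mul c
  unfold GpfIntegrable at *
  refine this.congr ?_
  intro τ _; dsimp only; ring

lemma GpfIntegrable.add' {α p x : ℝ} {h₁ h₂ : ℝ → ℝ} (i1 : GpfIntegrable α p x h₁)
    (i2 : GpfIntegrable α p x h₂) : GpfIntegrable α p x (fun τ => h₁ τ + h₂ τ) := by
  have := IntervalIntegrable.add i1 i2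
  unfold GpfIntegrable at *
  refine this.congr ?_
  intro τ _; dsimp only; ring

lemma gpf_congr {α p x : ℝ} {h₁ h₂ : ℝ → ℝ} (h : ∀ τ, h₁ τ = h₂ τ) :
    gpf α p x h₁ = gpf α p x h₂ := by
  have : h₁ = h₂ := funext h
  rw [this]

lemma GpfIntegrable.congr' {α p x : ℝ} {h₁ h₂ : ℝ → ℝ} (i : GpfIntegrable α p x h₁)
    (h : ∀ τ, h₁ τ = h₂ τ) : GpfIntegrable α p x h₂ := by
  have : h₁ = h₂ := funext h
  rwa [this] at i

/-- Cauchy–Schwarz for the GPF integral. -/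
lemma gpf_sq_le {α p x : ℝ} (hα : 0 < α) (hp : 0 < p) (hx : 0 ≤ x) {h : ℝ → ℝ}
    (i1 : GpfIntegrable α p x (fun _ => 1)) (ih : GpfIntegrable α p x h)
    (ih2 : GpfIntegrable α p x (fun τ => h τ ^ 2)) :
    (gpf α p x h) ^ 2 ≤ gpf α p x (fun _ => 1) * gpf α p x (fun τ => h τ ^ 2) := by
  have key : ∀ t : ℝ, 0 ≤ gpf α p x (fun _ => 1) * (t * t) + (-2 * gpf α p x h) * t
      + gpf α p x (fun τ => h τ ^ 2) := by
    intro t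
    have e1 : gpf α p x (fun τ => (h τ - t) ^ 2)
        = gpf α p x (fun τ => h τ ^ 2) + (-(2*t)) * gpf α p x h
          + (t*t) * gpf α p x (fun _ => 1) := by
      rw [show (fun τ => (h τ - t) ^ 2)
          = (fun τ => (h τ ^ 2 + (-(2*t)) * h τ) + (t*t) * (1:ℝ)) by funext τ; ring]
      rw [gpf_add (ih2.add' (ih.smul _)) (i1.smul _), gpf_add ih2 (ih.smul _),
        gpf_smul, gpf_smul]
    have e2 : 0 ≤ gpf α p x (fun τ => (h τ - t) ^ 2) :=
      gpf_nonneg hα hp hx fun τ _ => sq_nonneg _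
    nlinarith [e2, e1]
  have := discrim_le_zero key
  unfold discrim at this
  nlinarith [this]

lemma quad_aux {a b A B u v : ℝ} (ha : 0 ≤ a) (hb : 0 ≤ b) (hA : 0 ≤ A) (hB : 0 ≤ B)
    (h1 : u ^ 2 ≤ a * A) (h2 : v ^ 2 ≤ b * B) : 2 * u * v ≤ a * B + b * A := by
  have hu : |u| ≤ Real.sqrt (a * A) := by
    rw [← Real.sqrt_sq_eq_abs]
    exact Real.sqrt_le_sqrt h1
  have hv : |v| ≤ Real.sqrt (b * B) := by
    rw [← Real.sqrt_sq_eq_abs]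
    exact Real.sqrt_le_sqrt h2
  have habs : 2 * u * v ≤ 2 * (|u| * |v|) := by
    have := neg_abs_le (u * v)
    have := le_abs_self (u * v)
    rw [abs_mul] at *
    nlinarith
  have hprod : |u| * |v| ≤ Real.sqrt (a * A) * Real.sqrt (b * B) :=
    mul_le_mul hu hv (abs_nonneg _) (Real.sqrt_nonneg _)
  have hs : Real.sqrt (a * A) * Real.sqrt (b * B) = Real.sqrt (a * B) * Real.sqrt (b * A) := by
    rw [← Real.sqrt_mul (by positivity), ← Real.sqrt_mul (by positivity)]
    ring_nf
  have hfin : 2 * (Real.sqrt (a * B) * Real.sqrt (b * A)) ≤ a * B + b * A := by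
    nlinarith [sq_nonneg (Real.sqrt (a*B) - Real.sqrt (b*A)),
      Real.sq_sqrt (mul_nonneg ha hB), Real.sq_sqrt (mul_nonneg hb hA)]
  nlinarith [habs, hprod, hs, hfin]

lemma div_aux {A C D : ℝ} (hA : 0 ≤ A) (hC : 0 < C) (h : A + C ≤ D) :
    A ≤ D ^ 2 / (4 * C) := by
  rw [le_div_iff₀ (by positivity)]
  nlinarith [sq_nonneg (A - C)]

set_option maxHeartbeats 1000000 in
theorem gpf_chebyshev_two_param
    (α β p₁ p₂ x : ℝ) (hα : 0 < α) (hβ : 0 < β)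
    (hp₁ : p₁ ∈ Set.Ioc (0:ℝ) 1) (hp₂ : p₂ ∈ Set.Ioc (0:ℝ) 1) (hx : 0 < x)
    (f g v₁ v₂ w₁ w₂ : ℝ → ℝ)
    (hfb : ∀ τ ∈ Set.Icc (0:ℝ) x, 0 < v₁ τ ∧ v₁ τ ≤ f τ ∧ f τ ≤ v₂ τ)
    (hgb : ∀ τ ∈ Set.Icc (0:ℝ) x, 0 < w₁ τ ∧ w₁ τ ≤ g τ ∧ g τ ≤ w₂ τ)
    (hint1 : GpfIntegrable α p₁ x (fun _ => 1)) (hint2 : GpfIntegrable β p₂ x (fun _ => 1))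
    (hint3 : GpfIntegrable α p₁ x f) (hint4 : GpfIntegrable β p₂ x f)
    (hint5 : GpfIntegrable α p₁ x g) (hint6 : GpfIntegrable β p₂ x g)
    (hint7 : GpfIntegrable α p₁ x (fun τ => f τ * g τ))
    (hint8 : GpfIntegrable β p₂ x (fun τ => f τ * g τ))
    (hint9 : GpfIntegrable α p₁ x (fun τ => f τ ^ 2))
    (hint10 : GpfIntegrable β p₂ x (fun τ => f τ ^ 2))
    (hint11 : GpfIntegrable α p₁ x (fun τ => g τ ^ 2))
    (hint12 : GpfIntegrable β p₂ x (fun τ => g τ ^ 2))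
    (hint13 : GpfIntegrable α p₁ x (fun τ => (v₁ τ + v₂ τ) * f τ))
    (hint14 : GpfIntegrable β p₂ x (fun τ => (v₁ τ + v₂ τ) * f τ))
    (hint15 : GpfIntegrable α p₁ x (fun τ => v₁ τ * v₂ τ))
    (hint16 : GpfIntegrable β p₂ x (fun τ => v₁ τ * v₂ τ))
    (hint17 : GpfIntegrable α p₁ x (fun τ => (w₁ τ + w₂ τ) * g τ))
    (hint18 : GpfIntegrable β p₂ x (fun τ => (w₁ τ + w₂ τ) * g τ))
    (hint19 : GpfIntegrable α p₁ x (fun τ => w₁ τ * w₂ τ))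
    (hint20 : GpfIntegrable β p₂ x (fun τ => w₁ τ * w₂ τ))
    (A₁ : (ℝ → ℝ) → (ℝ → ℝ) → (ℝ → ℝ) → ℝ)
    (A₂ : (ℝ → ℝ) → (ℝ → ℝ) → (ℝ → ℝ) → ℝ)
    (hA₁ : ∀ u v w, A₁ u v w =
      gpf β p₂ x (fun _ => 1) *
          (gpf α p₁ x (fun τ => (v τ + w τ) * u τ)) ^ 2 /
          (4 * gpf α p₁ x (fun τ => v τ * w τ)) -
        gpf α p₁ x u * gpf β p₂ x u)
    (hA₂ : ∀ u v w, A₂ u v w =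
      gpf α p₁ x (fun _ => 1) *
          (gpf β p₂ x (fun τ => (v τ + w τ) * u τ)) ^ 2 /
          (4 * gpf β p₂ x (fun τ => v τ * w τ)) -
        gpf α p₁ x u * gpf β p₂ x u) :
    gpf α p₁ x (fun _ => 1) * gpf β p₂ x (fun τ => f τ * g τ) +
        gpf β p₂ x (fun _ => 1) * gpf α p₁ x (fun τ => f τ * g τ) -
        gpf α p₁ x f * gpf β p₂ x g - gpf β p₂ x f * gpf α p₁ x g ≤
      |A₁ f v₁ v₂ + A₂ f v₁ v₂| ^ ((1:ℝ)/2) * |A₁ g w₁ w₂ + A₂ g w₁ w₂| ^ ((1:ℝ)/2) := by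
  obtain ⟨hp1, -⟩ := hp₁
  obtain ⟨hp2, -⟩ := hp₂
  have hv2pos : ∀ τ ∈ Set.Icc (0:ℝ) x, 0 < v₁ τ * v₂ τ := fun τ hτ => by
    obtain ⟨h1, h2, h3⟩ := hfb τ hτ
    exact mul_pos h1 (lt_of_lt_of_le h1 (le_trans h2 h3))
  have hw2pos : ∀ τ ∈ Set.Icc (0:ℝ) x, 0 < w₁ τ * w₂ τ := fun τ hτ => by
    obtain ⟨h1, h2, h3⟩ := hgb τ hτ
    exact mul_pos h1 (lt_of_lt_of_le h1 (le_trans h2 h3))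
  have hptf : ∀ τ ∈ Set.Icc (0:ℝ) x, f τ ^ 2 + v₁ τ * v₂ τ ≤ (v₁ τ + v₂ τ) * f τ := by
    intro τ hτ
    obtain ⟨h1, h2, h3⟩ := hfb τ hτ
    have h4 : 0 ≤ (f τ - v₁ τ) * (v₂ τ - f τ) :=
      mul_nonneg (sub_nonneg.mpr h2) (sub_nonneg.mpr h3)
    nlinarith [h4]
  have hptg : ∀ τ ∈ Set.Icc (0:ℝ) x, g τ ^ 2 + w₁ τ * w₂ τ ≤ (w₁ τ + w₂ τ) * g τ := by
    intro τ hτ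
    obtain ⟨h1, h2, h3⟩ := hgb τ hτ
    have h4 : 0 ≤ (g τ - w₁ τ) * (w₂ τ - g τ) :=
      mul_nonneg (sub_nonneg.mpr h2) (sub_nonneg.mpr h3)
    nlinarith [h4]
  set Ia1 := gpf α p₁ x (fun _ => 1) with hIa1e
  set Ib1 := gpf β p₂ x (fun _ => 1) with hIb1e
  set Iaf := gpf α p₁ x f with hIafe
  set Ibf := gpf β p₂ x f with hIbfe
  set Iag := gpf α p₁ x g with hIage
  set Ibg := gpf β p₂ x g with hIbge
  set Iafg := gpf α p₁ x (fun τ => f τ * g τ) with hIafge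
  set Ibfg := gpf β p₂ x (fun τ => f τ * g τ) with hIbfge
  set Iaf2 := gpf α p₁ x (fun τ => f τ ^ 2) with hIaf2e
  set Ibf2 := gpf β p₂ x (fun τ => f τ ^ 2) with hIbf2e
  set Iag2 := gpf α p₁ x (fun τ => g τ ^ 2) with hIag2e
  set Ibg2 := gpf β p₂ x (fun τ => g τ ^ 2) with hIbg2e
  set Iavf := gpf α p₁ x (fun τ => (v₁ τ + v₂ τ) * f τ) with hIavfe
  set Ibvf := gpf β p₂ x (fun τ => (v₁ τ + v₂ τ) * f τ) with hIbvfe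
  set Iavv := gpf α p₁ x (fun τ => v₁ τ * v₂ τ) with hIavve
  set Ibvv := gpf β p₂ x (fun τ => v₁ τ * v₂ τ) with hIbvve
  set Iawg := gpf α p₁ x (fun τ => (w₁ τ + w₂ τ) * g τ) with hIawge
  set Ibwg := gpf β p₂ x (fun τ => (w₁ τ + w₂ τ) * g τ) with hIbwge
  set Iaww := gpf α p₁ x (fun τ => w₁ τ * w₂ τ) with hIawwe
  set Ibww := gpf β p₂ x (fun τ => w₁ τ * w₂ τ) with hIbwwe
  set Bff := Ia1 * Ibf2 + Ib1 * Iaf2 - 2 * Iaf * Ibf with hBffe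
  set Bfg := Ia1 * Ibfg + Ib1 * Iafg - Iaf * Ibg - Ibf * Iag with hBfge
  set Bgg := Ia1 * Ibg2 + Ib1 * Iag2 - 2 * Iag * Ibg with hBgge
  have ha1 : 0 ≤ Ia1 := gpf_nonneg hα hp1 hx.le fun τ _ => zero_le_one
  have hb1 : 0 ≤ Ib1 := gpf_nonneg hβ hp2 hx.le fun τ _ => zero_le_one
  -- nonnegativity of integrals of squares
  have haf2 : 0 ≤ Iaf2 := gpf_nonneg hα hp1 hx.le fun τ _ => sq_nonneg _
  have hbf2 : 0 ≤ Ibf2 := gpf_nonneg hβ hp2 hx.le fun τ _ => sq_nonneg _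
  have hag2 : 0 ≤ Iag2 := gpf_nonneg hα hp1 hx.le fun τ _ => sq_nonneg _
  have hbg2 : 0 ≤ Ibg2 := gpf_nonneg hβ hp2 hx.le fun τ _ => sq_nonneg _
  -- key quadratic nonnegativity
  have key : ∀ t : ℝ, 0 ≤ Bgg * (t * t) + (2 * Bfg) * t + Bff := by
    intro t
    have ihα : GpfIntegrable α p₁ x (fun τ => f τ + t * g τ) := hint3.add' (hint5.smul t)
    have ihβ : GpfIntegrable β p₂ x (fun τ => f τ + t * g τ) := hint4.add' (hint6.smul t)
    have ihα2 : GpfIntegrable α p₁ x (fun τ => (f τ + t * g τ) ^ 2) :=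
      ((hint9.add' (hint7.smul (2 * t))).add' (hint11.smul (t * t))).congr'
        (fun τ => by ring)
    have ihβ2 : GpfIntegrable β p₂ x (fun τ => (f τ + t * g τ) ^ 2) :=
      ((hint10.add' (hint8.smul (2 * t))).add' (hint12.smul (t * t))).congr'
        (fun τ => by ring)
    have eαh : gpf α p₁ x (fun τ => f τ + t * g τ) = Iaf + t * Iag := by
      rw [gpf_add hint3 (hint5.smul t), gpf_smul, hIafe, hIage]
    have eβh : gpf β p₂ x (fun τ => f τ + t * g τ) = Ibf + t * Ibg := by
      rw [gpf_add hint4 (hint6.smul t), gpf_smul, hIbfe, hIbge]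
    have eα2 : gpf α p₁ x (fun τ => (f τ + t * g τ) ^ 2)
        = Iaf2 + (2 * t) * Iafg + (t * t) * Iag2 := by
      rw [gpf_congr (show ∀ τ, (f τ + t * g τ) ^ 2
          = (f τ ^ 2 + (2 * t) * (f τ * g τ)) + (t * t) * (g τ ^ 2) from fun τ => by ring)]
      rw [gpf_add (hint9.add' (hint7.smul (2 * t))) (hint11.smul (t * t)),
        gpf_add hint9 (hint7.smul (2 * t)), gpf_smul, gpf_smul,
        hIaf2e, hIafge, hIag2e]
    have eβ2 : gpf β p₂ x (fun τ => (f τ + t * g τ) ^ 2)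
        = Ibf2 + (2 * t) * Ibfg + (t * t) * Ibg2 := by
      rw [gpf_congr (show ∀ τ, (f τ + t * g τ) ^ 2
          = (f τ ^ 2 + (2 * t) * (f τ * g τ)) + (t * t) * (g τ ^ 2) from fun τ => by ring)]
      rw [gpf_add (hint10.add' (hint8.smul (2 * t))) (hint12.smul (t * t)),
        gpf_add hint10 (hint8.smul (2 * t)), gpf_smul, gpf_smul,
        hIbf2e, hIbfge, hIbg2e]
    have csα := gpf_sq_le hα hp1 hx.le hint1 ihα ihα2
    have csβ := gpf_sq_le hβ hp2 hx.le hint2 ihβ ihβ2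
    rw [eαh, eα2, ← hIa1e] at csα
    rw [eβh, eβ2, ← hIb1e] at csβ
    have hA : 0 ≤ Iaf2 + (2 * t) * Iafg + (t * t) * Iag2 := by
      rw [← eα2]; exact gpf_nonneg hα hp1 hx.le fun τ _ => sq_nonneg _
    have hB : 0 ≤ Ibf2 + (2 * t) * Ibfg + (t * t) * Ibg2 := by
      rw [← eβ2]; exact gpf_nonneg hβ hp2 hx.le fun τ _ => sq_nonneg _
    have hq := quad_aux ha1 hb1 hA hB csα csβ
    have hexp : Bgg * (t * t) + (2 * Bfg) * t + Bff
        = (Ia1 * (Ibf2 + (2 * t) * Ibfg + (t * t) * Ibg2)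
            + Ib1 * (Iaf2 + (2 * t) * Iafg + (t * t) * Iag2))
          - 2 * (Iaf + t * Iag) * (Ibf + t * Ibg) := by
      rw [hBffe, hBfge, hBgge]; ring
    rw [hexp]
    exact sub_nonneg.mpr hq
  -- Cauchy–Schwarz for the bilinear form
  have hdis := discrim_le_zero key
  rw [discrim] at hdis
  have hBfg_sq : Bfg ^ 2 ≤ Bff * Bgg := by nlinarith [hdis]
  -- Bff, Bgg nonneg
  have csf_a := gpf_sq_le hα hp1 hx.le hint1 hint3 hint9
  have csf_b := gpf_sq_le hβ hp2 hx.le hint2 hint4 hint10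
  have csg_a := gpf_sq_le hα hp1 hx.le hint1 hint5 hint11
  have csg_b := gpf_sq_le hβ hp2 hx.le hint2 hint6 hint12
  rw [← hIa1e, ← hIafe, ← hIaf2e] at csf_a
  rw [← hIb1e, ← hIbfe, ← hIbf2e] at csf_b
  rw [← hIa1e, ← hIage, ← hIag2e] at csg_a
  rw [← hIb1e, ← hIbge, ← hIbg2e] at csg_b
  have hBff0 : 0 ≤ Bff := by
    have := quad_aux ha1 hb1 haf2 hbf2 csf_a csf_b
    rw [hBffe]; linarith
  have hBgg0 : 0 ≤ Bgg := by
    have := quad_aux ha1 hb1 hag2 hbg2 csg_a csg_b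
    rw [hBgge]; linarith
  -- pointwise bounds give the Grüss-type estimates
  have hIavv_pos : 0 < Iavv := gpf_pos hα hp1 hx hint15 hv2pos
  have hIbvv_pos : 0 < Ibvv := gpf_pos hβ hp2 hx hint16 hv2pos
  have hIaww_pos : 0 < Iaww := gpf_pos hα hp1 hx hint19 hw2pos
  have hIbww_pos : 0 < Ibww := gpf_pos hβ hp2 hx hint20 hw2pos
  have hsum_af : Iaf2 + Iavv ≤ Iavf := by
    have := gpf_mono hα hp1 hx.le (hint9.add' hint15) hint13 hptf
    rwa [gpf_add hint9 hint15, ← hIaf2e, ← hIavve, ← hIavfe] at this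
  have hsum_bf : Ibf2 + Ibvv ≤ Ibvf := by
    have := gpf_mono hβ hp2 hx.le (hint10.add' hint16) hint14 hptf
    rwa [gpf_add hint10 hint16, ← hIbf2e, ← hIbvve, ← hIbvfe] at this
  have hsum_ag : Iag2 + Iaww ≤ Iawg := by
    have := gpf_mono hα hp1 hx.le (hint11.add' hint19) hint17 hptg
    rwa [gpf_add hint11 hint19, ← hIag2e, ← hIawwe, ← hIawge] at this
  have hsum_bg : Ibg2 + Ibww ≤ Ibwg := by
    have := gpf_mono hβ hp2 hx.le (hint12.add' hint20) hint18 hptg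
    rwa [gpf_add hint12 hint20, ← hIbg2e, ← hIbwwe, ← hIbwge] at this
  have hdf_a : Iaf2 ≤ Iavf ^ 2 / (4 * Iavv) := div_aux haf2 hIavv_pos hsum_af
  have hdf_b : Ibf2 ≤ Ibvf ^ 2 / (4 * Ibvv) := div_aux hbf2 hIbvv_pos hsum_bf
  have hdg_a : Iag2 ≤ Iawg ^ 2 / (4 * Iaww) := div_aux hag2 hIaww_pos hsum_ag
  have hdg_b : Ibg2 ≤ Ibwg ^ 2 / (4 * Ibww) := div_aux hbg2 hIbww_pos hsum_bg
  have hS1 : Bff ≤ A₁ f v₁ v₂ + A₂ f v₁ v₂ := by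
    rw [hA₁, hA₂, hBffe]
    have h1 : Ia1 * Ibf2 ≤ Ia1 * (Ibvf ^ 2 / (4 * Ibvv)) :=
      mul_le_mul_of_nonneg_left hdf_b ha1
    have h2 : Ib1 * Iaf2 ≤ Ib1 * (Iavf ^ 2 / (4 * Iavv)) :=
      mul_le_mul_of_nonneg_left hdf_a hb1
    have e1 : Ib1 * Iavf ^ 2 / (4 * Iavv) = Ib1 * (Iavf ^ 2 / (4 * Iavv)) := by ring
    have e2 : Ia1 * Ibvf ^ 2 / (4 * Ibvv) = Ia1 * (Ibvf ^ 2 / (4 * Ibvv)) := by ring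
    rw [e1, e2]
    linarith
  have hS2 : Bgg ≤ A₁ g w₁ w₂ + A₂ g w₁ w₂ := by
    rw [hA₁, hA₂, hBgge]
    have h1 : Ia1 * Ibg2 ≤ Ia1 * (Ibwg ^ 2 / (4 * Ibww)) :=
      mul_le_mul_of_nonneg_left hdg_b ha1
    have h2 : Ib1 * Iag2 ≤ Ib1 * (Iawg ^ 2 / (4 * Iaww)) :=
      mul_le_mul_of_nonneg_left hdg_a hb1
    have e1 : Ib1 * Iawg ^ 2 / (4 * Iaww) = Ib1 * (Iawg ^ 2 / (4 * Iaww)) := by ring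
    have e2 : Ia1 * Ibwg ^ 2 / (4 * Ibww) = Ia1 * (Ibwg ^ 2 / (4 * Ibww)) := by ring
    rw [e1, e2]
    linarith
  have hS10 : 0 ≤ A₁ f v₁ v₂ + A₂ f v₁ v₂ := le_trans hBff0 hS1
  have hS20 : 0 ≤ A₁ g w₁ w₂ + A₂ g w₁ w₂ := le_trans hBgg0 hS2
  rw [abs_of_nonneg hS10, abs_of_nonneg hS20, ← Real.sqrt_eq_rpow, ← Real.sqrt_eq_rpow]
  have goal_eq : gpf α p₁ x (fun _ => 1) * gpf β p₂ x (fun τ => f τ * g τ) +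
      gpf β p₂ x (fun _ => 1) * gpf α p₁ x (fun τ => f τ * g τ) -
      gpf α p₁ x f * gpf β p₂ x g - gpf β p₂ x f * gpf α p₁ x g = Bfg := by
    rw [hBfge]
  calc Bfg ≤ |Bfg| := le_abs_self _
    _ = Real.sqrt (Bfg ^ 2) := (Real.sqrt_sq_eq_abs _).symm
    _ ≤ Real.sqrt (Bff * Bgg) := Real.sqrt_le_sqrt hBfg_sq
    _ = Real.sqrt Bff * Real.sqrt Bgg := Real.sqrt_mul hBff0 _
    _ ≤ Real.sqrt (A₁ f v₁ v₂ + A₂ f v₁ v₂) * Real.sqrt (A₁ g w₁ w₂ + A₂ g w₁ w₂) :=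
        mul_le_mul (Real.sqrt_le_sqrt hS1) (Real.sqrt_le_sqrt hS2)
          (Real.sqrt_nonneg _) (Real.sqrt_nonneg _)
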